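/- Let f be a convex function of n variables defined on a cube, let a₁,...,a_m be operators on a finite-dimensional Hilbert space with Σ_t a_t* a_t = 1, and let (x_{1t},...,x_{nt}) for each t be an abelian n-tuple of self-adjoint operators in the domain of f. If ξ is a unit vector and y_i = Σ_t a_t* x_{it} a_t, then f(⟨y₁ξ,ξ⟩,...,⟨yₙξ,ξ⟩) ≤ ⟨(Σ_t a_t* f(x_{1t},...,x_{nt}) a_t) ξ, ξ⟩. -/
import Mathlib


open Matrix
open scoped ComplexOrder

lemma quad_form {m : ℕ} (A Um : Matrix (Fin m) (Fin m) ℂ) (d : Fin m → ℝ)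
    (ξ : Fin m → ℂ) :
    star ξ ⬝ᵥ ((star A * (Um * Matrix.diagonal (fun j => (d j : ℂ)) * star Um) * A) *ᵥ ξ)
      = ∑ j, (d j : ℂ) * Complex.normSq ((star Um *ᵥ (A *ᵥ ξ)) j) := by
  have h1 : ∀ (M : Matrix (Fin m) (Fin m) ℂ) (v w : Fin m → ℂ),
      star v ⬝ᵥ (star M *ᵥ w) = star (M *ᵥ v) ⬝ᵥ w := by
    intro M v w
    rw [Matrix.star_mulVec, Matrix.dotProduct_mulVec]
    rfl
  simp only [← Matrix.mulVec_mulVec]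
  rw [h1 A]
  rw [show (Um : Matrix (Fin m) (Fin m) ℂ) = star (star Um) from (star_star Um).symm, h1]
  simp only [star_star]
  simp only [dotProduct, Matrix.mulVec_diagonal, Pi.star_apply]
  congr 1; funext j
  have h2 : (Complex.normSq ((star Um *ᵥ (A *ᵥ ξ)) j) : ℂ)
      = (star Um *ᵥ (A *ᵥ ξ)) j * star ((star Um *ᵥ (A *ᵥ ξ)) j) := by
    rw [Complex.star_def, Complex.mul_conj]
  rw [h2]; ring

/-- Jensen's inequality for expectation values with a unital column tuple:
if `Σ_t a_t* a_t = 1`, each `(x_{1t},…,x_{nt})` is an abelian `n`-tuple of self-adjoint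
matrices with joint spectrum in the cube where `f` is convex (encoded via simultaneous
diagonalizations), `f(x_{1t},…,x_{nt})` is given by multivariate functional calculus,
`y_i = Σ_t a_t* x_{it} a_t` and `ξ` is a unit vector, then
`f(⟨y₁ξ,ξ⟩,…,⟨yₙξ,ξ⟩) ≤ ⟨(Σ_t a_t* f(x_{1t},…,x_{nt}) a_t) ξ, ξ⟩`. -/
theorem jensen_expectation_column (n m N : ℕ)
    (I : Fin n → Set ℝ) (hI : ∀ i, (I i).OrdConnected)
    (f : (Fin n → ℝ) → ℝ) (hf : ConvexOn ℝ (Set.univ.pi I) f)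
    (a : Fin N → Matrix (Fin m) (Fin m) ℂ)
    (ha : ∑ t, star (a t) * a t = 1)
    (x : Fin N → Fin n → Matrix (Fin m) (Fin m) ℂ)
    (U : Fin N → Matrix (Fin m) (Fin m) ℂ)
    (hU : ∀ t, U t ∈ Matrix.unitaryGroup (Fin m) ℂ)
    (lam : Fin N → Fin n → Fin m → ℝ)
    (hx : ∀ t i, x t i = U t * Matrix.diagonal (fun j => (lam t i j : ℂ)) * star (U t))
    (hspec : ∀ t j, (fun i => lam t i j) ∈ Set.univ.pi I)
    (fx : Fin N → Matrix (Fin m) (Fin m) ℂ)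
    (hfx : ∀ t, fx t =
      U t * Matrix.diagonal (fun j => (f (fun i => lam t i j) : ℂ)) * star (U t))
    (y : Fin n → Matrix (Fin m) (Fin m) ℂ)
    (hy : ∀ i, y i = ∑ t, star (a t) * x t i * a t)
    (ξ : Fin m → ℂ) (hξ : star ξ ⬝ᵥ ξ = 1) :
    f (fun i => (star ξ ⬝ᵥ (y i *ᵥ ξ)).re) ≤
      (star ξ ⬝ᵥ ((∑ t, star (a t) * fx t * a t) *ᵥ ξ)).re := by
  classical
  set w : Fin N → Fin m → ℝ :=
    fun t j => Complex.normSq ((star (U t) *ᵥ (a t *ᵥ ξ)) j) with hwdef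
  have hw0 : ∀ t j, 0 ≤ w t j := fun t j => Complex.normSq_nonneg _
  -- sum over t of quadratic forms distributes
  have hdot : ∀ (M : Fin N → Matrix (Fin m) (Fin m) ℂ),
      star ξ ⬝ᵥ ((∑ t, M t) *ᵥ ξ) = ∑ t, star ξ ⬝ᵥ (M t *ᵥ ξ) := by
    intro M
    have h := map_sum (Matrix.mulVec.addMonoidHomLeft ξ) M Finset.univ
    change (∑ t, M t) *ᵥ ξ = ∑ t, M t *ᵥ ξ at h
    rw [h]
    simp only [dotProduct, Finset.sum_apply, Finset.mul_sum]
    exact Finset.sum_comm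
  -- weights sum to 1
  have hUU : ∀ t, U t * star (U t) = 1 := fun t =>
    (Matrix.mem_unitaryGroup_iff.mp (hU t))
  have hwsum : ∑ t, ∑ j, w t j = 1 := by
    have h1 : ∀ t, star ξ ⬝ᵥ ((star (a t) * a t) *ᵥ ξ) = ∑ j, ((1:ℝ) : ℂ) * w t j := by
      intro t
      have := quad_form (a t) (U t) (fun _ => (1:ℝ)) ξ
      simpa [hwdef, Matrix.diagonal_one, hUU t, Matrix.mul_one] using this
    have h2 : (1 : ℂ) = ∑ t, ∑ j, ((w t j : ℝ) : ℂ) := by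
      calc (1 : ℂ) = star ξ ⬝ᵥ ((∑ t, star (a t) * a t) *ᵥ ξ) := by
            rw [ha, Matrix.one_mulVec, hξ]
        _ = ∑ t, star ξ ⬝ᵥ ((star (a t) * a t) *ᵥ ξ) := hdot _
        _ = ∑ t, ∑ j, ((w t j : ℝ) : ℂ) := by
            refine Finset.sum_congr rfl fun t _ => ?_
            rw [h1 t]; simp
    have := congrArg Complex.re h2
    simpa using this.symm
  -- coordinates of y
  have hyi : ∀ i, (star ξ ⬝ᵥ (y i *ᵥ ξ)).re = ∑ t, ∑ j, w t j * lam t i j := by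
    intro i
    rw [hy i, hdot]
    have h1 : ∀ t, star ξ ⬝ᵥ ((star (a t) * x t i * a t) *ᵥ ξ)
        = ∑ j, ((lam t i j : ℝ) : ℂ) * w t j := by
      intro t
      rw [hx t i]
      simpa [hwdef] using quad_form (a t) (U t) (fun j => lam t i j) ξ
    rw [Finset.sum_congr rfl fun t _ => h1 t]
    push_cast
    rw [Complex.re_sum]
    refine Finset.sum_congr rfl fun t _ => ?_
    rw [Complex.re_sum]
    refine Finset.sum_congr rfl fun j _ => ?_
    simp [mul_comm]
  -- RHS
  have hrhs : (star ξ ⬝ᵥ ((∑ t, star (a t) * fx t * a t) *ᵥ ξ)).re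
      = ∑ t, ∑ j, w t j * f (fun i => lam t i j) := by
    rw [hdot]
    have h1 : ∀ t, star ξ ⬝ᵥ ((star (a t) * fx t * a t) *ᵥ ξ)
        = ∑ j, ((f (fun i => lam t i j) : ℝ) : ℂ) * w t j := by
      intro t
      rw [hfx t]
      simpa [hwdef] using quad_form (a t) (U t) (fun j => f (fun i => lam t i j)) ξ
    rw [Finset.sum_congr rfl fun t _ => h1 t]
    rw [Complex.re_sum]
    refine Finset.sum_congr rfl fun t _ => ?_
    rw [Complex.re_sum]
    refine Finset.sum_congr rfl fun j _ => ?_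
    simp [mul_comm]
  -- Jensen
  have key := hf.map_sum_le (t := (Finset.univ : Finset (Fin N × Fin m)))
      (w := fun p => w p.1 p.2) (p := fun p => fun i => lam p.1 i p.2)
      (fun p _ => hw0 p.1 p.2)
      (by rw [Fintype.sum_prod_type]; exact hwsum)
      (fun p _ => hspec p.1 p.2)
  have hL : (fun i => (star ξ ⬝ᵥ (y i *ᵥ ξ)).re)
      = ∑ p : Fin N × Fin m, (w p.1 p.2) • (fun i => lam p.1 i p.2) := by
    funext i
    rw [Finset.sum_apply]
    rw [hyi i, Fintype.sum_prod_type]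
    simp [smul_eq_mul]
  have hR : ∑ p : Fin N × Fin m, (w p.1 p.2) • f (fun i => lam p.1 i p.2)
      = ∑ t, ∑ j, w t j * f (fun i => lam t i j) := by
    rw [Fintype.sum_prod_type]
    simp [smul_eq_mul]
  rw [hL, hrhs, ← hR]
  exact key
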